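/- Suppose HᴴH − GᴴG is positive definite. Then for any n_t×n_t Hermitian positive semidefinite matrix S, the matrix S^{1/2}(HᴴH − GᴴG)S^{1/2} is positive definite if and only if S is positive definite; equivalently, all generalized eigenvalues of the pencil (S^{1/2}HᴴH S^{1/2} + I, S^{1/2}GᴴG S^{1/2} + I) are strictly greater than 1 if and only if S is full rank. -/

import Mathlib

open Matrix
open scoped ComplexOrder

namespace Matrix.PosSemidef

noncomputable def sqrt {n 𝕜 : Type*} [Fintype n] [DecidableEq n] [RCLike 𝕜]
    {A : Matrix n n 𝕜} (hA : A.PosSemidef) : Matrix n n 𝕜 :=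
  hA.1.eigenvectorUnitary.1 * diagonal ((↑) ∘ (√·) ∘ hA.1.eigenvalues) *
  (star hA.1.eigenvectorUnitary : Matrix n n 𝕜)

end Matrix.PosSemidef

private lemma sqrt_isHermitian_aux {n : ℕ} {A : Matrix (Fin n) (Fin n) ℂ}
    (hA : A.PosSemidef) : hA.sqrt.IsHermitian := by
  unfold Matrix.PosSemidef.sqrt
  have hD : (diagonal (((↑) ∘ (√·) ∘ hA.1.eigenvalues) : Fin n → ℂ)).IsHermitian := by
    rw [isHermitian_diagonal_iff]
    intro i
    simp [IsSelfAdjoint, Complex.conj_ofReal]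
  have := isHermitian_mul_mul_conjTranspose (hA.1.eigenvectorUnitary : Matrix (Fin n) (Fin n) ℂ) hD
  simpa [star_eq_conjTranspose] using this

private lemma sqrt_mul_self_aux {n : ℕ} {A : Matrix (Fin n) (Fin n) ℂ}
    (hA : A.PosSemidef) : hA.sqrt * hA.sqrt = A := by
  unfold Matrix.PosSemidef.sqrt
  set U := hA.1.eigenvectorUnitary
  have hU : (star U : Matrix (Fin n) (Fin n) ℂ) * (U : Matrix (Fin n) (Fin n) ℂ) = 1 :=
    Unitary.coe_star_mul_self U
  have hDD : (diagonal (((↑) ∘ (√·) ∘ hA.1.eigenvalues) : Fin n → ℂ)) *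
      diagonal (((↑) ∘ (√·) ∘ hA.1.eigenvalues) : Fin n → ℂ) =
      diagonal (RCLike.ofReal ∘ hA.1.eigenvalues) := by
    rw [diagonal_mul_diagonal]
    congr 1
    funext i
    simp only [Function.comp_apply]
    rw [← Complex.ofReal_mul, Real.mul_self_sqrt (hA.eigenvalues_nonneg i)]
    rfl
  have hS := hA.1.spectral_theorem
  rw [Unitary.conjStarAlgAut_apply] at hS
  calc _ = (U : Matrix (Fin n) (Fin n) ℂ) * (diagonal (((↑) ∘ (√·) ∘ hA.1.eigenvalues) : Fin n → ℂ) *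
        ((star U : Matrix (Fin n) (Fin n) ℂ) * (U : Matrix (Fin n) (Fin n) ℂ)) *
        diagonal (((↑) ∘ (√·) ∘ hA.1.eigenvalues) : Fin n → ℂ)) *
        (star U : Matrix (Fin n) (Fin n) ℂ) := by simp only [Matrix.mul_assoc]; rfl
    _ = A := by rw [hU, Matrix.mul_one, hDD]; exact hS.symm

private lemma key_id {nt : ℕ} {Q M : Matrix (Fin nt) (Fin nt) ℂ} (hQ : Qᴴ = Q)
    (x : Fin nt → ℂ) :
    star x ⬝ᵥ ((Q * M * Q) *ᵥ x) = star (Q *ᵥ x) ⬝ᵥ (M *ᵥ (Q *ᵥ x)) := by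
  simp only [star_mulVec, dotProduct_mulVec, vecMul_vecMul, mulVec_mulVec, hQ,
    Matrix.mul_assoc]

/-- If `HᴴH − GᴴG ≻ 0`, then for any PSD `S`, the matrix
`S^{1/2}(HᴴH − GᴴG)S^{1/2}` is positive definite iff `S` is positive definite
(iff all generalized eigenvalues of the corresponding pencil exceed 1). -/
theorem stmt7 {nr ne nt : ℕ}
    (H : Matrix (Fin nr) (Fin nt) ℂ) (G : Matrix (Fin ne) (Fin nt) ℂ)
    (hHG : (Hᴴ * H - Gᴴ * G).PosDef)
    (S : Matrix (Fin nt) (Fin nt) ℂ) (hS : S.PosSemidef) :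
    (hS.sqrt * (Hᴴ * H - Gᴴ * G) * hS.sqrt).PosDef ↔ S.PosDef := by
  have hQH : hS.sqrtᴴ = hS.sqrt := sqrt_isHermitian_aux hS
  have hSQ : hS.sqrt * hS.sqrt = S := sqrt_mul_self_aux hS
  have hSid : ∀ x : Fin nt → ℂ,
      star x ⬝ᵥ (S *ᵥ x) = star (hS.sqrt *ᵥ x) ⬝ᵥ (hS.sqrt *ᵥ x) := by
    intro x
    have := key_id (M := (1 : Matrix (Fin nt) (Fin nt) ℂ)) hQH x
    simpa [hSQ] using this
  constructor
  · intro h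
    refine .of_dotProduct_mulVec_pos hS.1 fun x hx => ?_
    have hQx : hS.sqrt *ᵥ x ≠ 0 := by
      intro h0
      have hpos := h.dotProduct_mulVec_pos hx
      rw [key_id hQH, h0] at hpos
      simp at hpos
    rw [hSid x]
    exact dotProduct_star_self_pos_iff.mpr hQx
  · intro h
    have herm : (hS.sqrt * (Hᴴ * H - Gᴴ * G) * hS.sqrtᴴ).PosSemidef :=
      hHG.posSemidef.mul_mul_conjTranspose_same _
    rw [hQH] at herm
    refine .of_dotProduct_mulVec_pos herm.isHermitian fun x hx => ?_
    have hQx : hS.sqrt *ᵥ x ≠ 0 := by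
      intro h0
      have hpos := h.dotProduct_mulVec_pos hx
      rw [hSid x, h0] at hpos
      simp at hpos
    rw [key_id hQH]
    exact hHG.dotProduct_mulVec_pos hQx
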